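/- Let p ≥ 1 be an integer, let d₁,…,d_p ≥ 0 be reals, and let u₀, u₁, …, u_p be linearly independent vectors in a real vector space V. Suppose that for each t < 0 there is a symmetric bilinear form J_t on V that is positive definite on span(u₀,…,u_p), such that: (a) for every fixed v ∈ span(u₀,…,u_p), the function t ↦ J_t(v,v) is non-increasing on (−∞,0); and (b) there are constants C₀,…,C_p with J_t(u₀,u₀) ≤ C₀ and J_t(u_i,u_i) ≤ C_i(1−t)^{d_i} for all t < 0 and i = 1,…,p. For t₀ < 0, let w_{0,t₀} = u₀ and, for i = 1,…,p, let w_{i,t₀} be u_i minus its J_{t₀}-orthogonal projection onto span(u₀,…,u_{i−1}), and set v_{i,t₀} = w_{i,t₀}/J_{t₀}(w_{i,t₀},w_{i,t₀})^{1/2}. Then for every μ > 0 and Ω > 1 there exist infinitely many m ∈ ℕ such that, with t₀ = −Ω^{m+1}, the vectors v_{1,t₀},…,v_{p,t₀} are J_{t₀}-orthonormal and ∑_{i=1}^p J_{−Ω^m}(v_{i,t₀}, v_{i,t₀}) ≥ p · Ω^{−μ−(d₁+⋯+d_p)/p}. -/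

import Mathlib

private lemma amgm_aux {p : ℕ} (hp : 1 ≤ p) (r : Fin p → ℝ) (hr : ∀ i, 0 ≤ r i)
    {E : ℝ} (hsum : ∑ i, r i < (p : ℝ) * E) : ∏ i, r i < E ^ p := by
  have hpR : (0:ℝ) < p := by exact_mod_cast hp
  have hgm := Real.geom_mean_le_arith_mean_weighted Finset.univ (fun _ => (p:ℝ)⁻¹) r
    (fun i _ => by positivity)
    (by simp [Finset.card_univ, mul_inv_cancel₀ (ne_of_gt hpR)])
    (fun i _ => hr i)
  have h2 : ∑ i : Fin p, (p:ℝ)⁻¹ * r i < E := by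
    rw [← Finset.mul_sum]
    rw [inv_mul_lt_iff₀ hpR]
    exact hsum
  have hG0 : 0 ≤ ∏ i, r i ^ ((p:ℝ)⁻¹) :=
    Finset.prod_nonneg fun i _ => Real.rpow_nonneg (hr i) _
  have hGE : (∏ i, r i ^ ((p:ℝ)⁻¹)) < E := lt_of_le_of_lt hgm h2
  have hfinal : (∏ i, r i ^ ((p:ℝ)⁻¹)) ^ p = ∏ i, r i := by
    rw [← Finset.prod_pow]
    refine Finset.prod_congr rfl fun i _ => ?_
    rw [← Real.rpow_natCast (r i ^ ((p:ℝ)⁻¹)) p, ← Real.rpow_mul (hr i),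
      inv_mul_cancel₀ (ne_of_gt hpR), Real.rpow_one]
  calc ∏ i, r i = (∏ i, r i ^ ((p:ℝ)⁻¹)) ^ p := hfinal.symm
    _ < E ^ p := by
        apply pow_lt_pow_left₀ hGE hG0
        omega

/-- Abstract lower bound for norms of caloric functions (Colding–Minicozzi Lemma 3.9).
`u 0, …, u p` are linearly independent, `J t` is a symmetric bilinear form, positive
definite on their span, with `t ↦ J t v v` non-increasing on `(-∞,0)`, and
`J t (u 0) (u 0) ≤ C 0`, `J t (u i) (u i) ≤ C i (1-t)^{d i}`.  For `t₀ = -Ω^{m+1}`,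
`w i` is `u i` minus its `J t₀`-orthogonal projection onto the span of the previous
`u j` (characterized by `w i - u i ∈ span {u j : j < i}` and `J t₀ (w i) (u j) = 0`
for `j < i`), and `v i = w i / √(J t₀ (w i) (w i))`.  Then for every `μ > 0`, `Ω > 1`
there are infinitely many `m ∈ ℕ` such that `v 1, …, v p` are `J t₀`-orthonormal and
`∑_{i=1}^p J (-Ω^m) (v i) (v i) ≥ p Ω^{-μ-(d 1+⋯+d p)/p}`. -/
theorem caloric_norm_lower_bound (V : Type*) [AddCommGroup V] [Module ℝ V]
    (p : ℕ) (hp : 1 ≤ p) (d : Fin p → ℝ) (hd : ∀ i, 0 ≤ d i)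
    (u : Fin (p + 1) → V) (hu : LinearIndependent ℝ u)
    (J : ℝ → LinearMap.BilinForm ℝ V)
    (hsymm : ∀ t < (0:ℝ), ∀ v w : V, J t v w = J t w v)
    (hposdef : ∀ t < (0:ℝ), ∀ v ∈ Submodule.span ℝ (Set.range u), v ≠ 0 → 0 < J t v v)
    (hmono : ∀ v ∈ Submodule.span ℝ (Set.range u), ∀ t₁ t₂ : ℝ, t₁ ≤ t₂ → t₂ < 0 →
      J t₂ v v ≤ J t₁ v v)
    (C : Fin (p + 1) → ℝ)
    (hC0 : ∀ t < (0:ℝ), J t (u 0) (u 0) ≤ C 0)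
    (hCi : ∀ t < (0:ℝ), ∀ i : Fin p,
      J t (u i.succ) (u i.succ) ≤ C i.succ * (1 - t) ^ (d i))
    (μ Ω : ℝ) (hμ : 0 < μ) (hΩ : 1 < Ω) :
    ∀ M : ℕ, ∃ mq : ℕ, M ≤ mq ∧
      ∀ w : Fin (p + 1) → V,
        (∀ i : Fin (p + 1),
          w i - u i ∈ Submodule.span ℝ (u '' {j : Fin (p + 1) | j < i})) →
        (∀ i j : Fin (p + 1), j < i → J (-Ω ^ (mq + 1)) (w i) (u j) = 0) →
        ((∀ i j : Fin (p + 1), i ≠ 0 → j ≠ 0 →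
            J (-Ω ^ (mq + 1))
              ((Real.sqrt (J (-Ω ^ (mq + 1)) (w i) (w i)))⁻¹ • w i)
              ((Real.sqrt (J (-Ω ^ (mq + 1)) (w j) (w j)))⁻¹ • w j)
              = if i = j then 1 else 0)
          ∧ (p : ℝ) * Ω ^ (-μ - (∑ i, d i) / p) ≤
              ∑ i : Fin p,
                J (-Ω ^ mq)
                  ((Real.sqrt (J (-Ω ^ (mq + 1)) (w i.succ) (w i.succ)))⁻¹ • w i.succ)
                  ((Real.sqrt (J (-Ω ^ (mq + 1)) (w i.succ) (w i.succ)))⁻¹ • w i.succ)) := by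
  intro M
  by_contra hcon
  push_neg at hcon
  have hΩ0 : (0:ℝ) < Ω := lt_trans one_pos hΩ
  have hpR : (0:ℝ) < p := by exact_mod_cast hp
  have htneg : ∀ n : ℕ, (-Ω ^ n : ℝ) < 0 := fun n => neg_lt_zero.mpr (pow_pos hΩ0 n)
  -- basic facts about admissible tuples
  have hST : ∀ i : Fin (p+1), Submodule.span ℝ (u '' {j : Fin (p+1) | j < i}) ≤
      Submodule.span ℝ (Set.range u) :=
    fun i => Submodule.span_mono (Set.image_subset_range u _)
  have hmemT : ∀ (w : Fin (p+1) → V),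
      (∀ i, w i - u i ∈ Submodule.span ℝ (u '' {j : Fin (p+1) | j < i})) →
      ∀ i, w i ∈ Submodule.span ℝ (Set.range u) := by
    intro w h1 i
    have h : w i = (w i - u i) + u i := by abel
    rw [h]
    exact Submodule.add_mem _ (hST i (h1 i))
      (Submodule.subset_span (Set.mem_range_self i))
  have hne : ∀ (w : Fin (p+1) → V),
      (∀ i, w i - u i ∈ Submodule.span ℝ (u '' {j : Fin (p+1) | j < i})) →
      ∀ i, w i ≠ 0 := by
    intro w h1 i h0
    have h1i := h1 i
    rw [h0, zero_sub] at h1i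
    exact hu.notMem_span_image (by simp : i ∉ {j : Fin (p+1) | j < i})
      ((Submodule.neg_mem_iff _).mp h1i)
  have hdiag : ∀ t < (0:ℝ), ∀ (w : Fin (p+1) → V),
      (∀ i, w i - u i ∈ Submodule.span ℝ (u '' {j : Fin (p+1) | j < i})) →
      ∀ i, 0 < J t (w i) (w i) := fun t ht w h1 i =>
    hposdef t ht _ (hmemT w h1 i) (hne w h1 i)
  have horthspan : ∀ (t : ℝ) (w : Fin (p+1) → V),
      (∀ i j, j < i → J t (w i) (u j) = 0) →
      ∀ i, ∀ x ∈ Submodule.span ℝ (u '' {j : Fin (p+1) | j < i}), J t (w i) x = 0 := by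
    intro t w h2 i x hx
    induction hx using Submodule.span_induction with
    | mem y hy => obtain ⟨j, hj, rfl⟩ := hy; exact h2 i j hj
    | zero => simp
    | add a b _ _ ha hb => simp [ha, hb]
    | smul c a _ ha => simp [ha]
  have hwmemS : ∀ (w : Fin (p+1) → V),
      (∀ i, w i - u i ∈ Submodule.span ℝ (u '' {j : Fin (p+1) | j < i})) →
      ∀ {j i : Fin (p+1)}, j < i →
      w j ∈ Submodule.span ℝ (u '' {k : Fin (p+1) | k < i}) := by
    intro w h1 j i hji
    have h : w j = (w j - u j) + u j := by abel
    rw [h]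
    refine Submodule.add_mem _ ?_ (Submodule.subset_span ⟨j, hji, rfl⟩)
    exact Submodule.span_mono
      (Set.image_mono fun k hk => lt_trans hk hji) (h1 j)
  -- Pythagoras comparison
  have hpyth : ∀ t < (0:ℝ), ∀ (w w' : Fin (p+1) → V),
      (∀ i, w i - u i ∈ Submodule.span ℝ (u '' {j : Fin (p+1) | j < i})) →
      (∀ i j, j < i → J t (w i) (u j) = 0) →
      (∀ i, w' i - u i ∈ Submodule.span ℝ (u '' {j : Fin (p+1) | j < i})) →
      ∀ i, J t (w i) (w i) ≤ J t (w' i) (w' i) := by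
    intro t ht w w' h1 h2 h1' i
    have hδ : w' i - w i ∈ Submodule.span ℝ (u '' {j : Fin (p+1) | j < i}) := by
      have h : w' i - w i = (w' i - u i) - (w i - u i) := by abel
      rw [h]; exact Submodule.sub_mem _ (h1' i) (h1 i)
    have hcross : J t (w i) (w' i - w i) = 0 := horthspan t w h2 i _ hδ
    have hcross' : J t (w' i - w i) (w i) = 0 := by rw [hsymm t ht]; exact hcross
    have hδδ : 0 ≤ J t (w' i - w i) (w' i - w i) := by
      rcases eq_or_ne (w' i - w i) 0 with h | h
      · simp [h]
      · exact le_of_lt (hposdef t ht _ (hST i hδ) h)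
    have hexp : J t (w' i) (w' i)
        = J t (w i) (w i) + J t (w i) (w' i - w i) + J t (w' i - w i) (w i)
          + J t (w' i - w i) (w' i - w i) := by
      have h : w' i = w i + (w' i - w i) := by abel
      conv_lhs => rw [h]
      simp only [map_add, LinearMap.add_apply]
      ring
    rw [hexp, hcross, hcross']
    linarith
  -- orthonormality
  have horthonorm : ∀ t < (0:ℝ), ∀ (w : Fin (p+1) → V),
      (∀ i, w i - u i ∈ Submodule.span ℝ (u '' {j : Fin (p+1) | j < i})) →
      (∀ i j, j < i → J t (w i) (u j) = 0) →
      ∀ i j, J t ((Real.sqrt (J t (w i) (w i)))⁻¹ • w i)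
          ((Real.sqrt (J t (w j) (w j)))⁻¹ • w j) = if i = j then 1 else 0 := by
    intro t ht w h1 h2 i j
    rcases eq_or_ne i j with rfl | hij
    · simp only [if_pos rfl, map_smul, LinearMap.smul_apply, smul_eq_mul]
      have hN := hdiag t ht w h1 i
      rw [← mul_assoc, ← mul_inv, Real.mul_self_sqrt hN.le]
      exact inv_mul_cancel₀ (ne_of_gt hN)
    · rw [if_neg hij]
      have hz : J t (w i) (w j) = 0 := by
        rcases lt_or_gt_of_ne hij with h | h
        · rw [hsymm t ht]; exact horthspan t w h2 j _ (hwmemS w h1 h)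
        · exact horthspan t w h2 i _ (hwmemS w h1 h)
      simp [map_smul, LinearMap.smul_apply, smul_eq_mul, hz]
  -- choose witnesses for each level k
  choose W h1 h2 h3 using fun k : ℕ => hcon (M + k) (Nat.le_add_right M k)
  have hpne : (p:ℝ) ≠ 0 := ne_of_gt hpR
  -- key step 1: AM-GM consequence at each level
  have key1 : ∀ k : ℕ,
      (∏ i : Fin p, J (-Ω ^ (M + k)) (W k i.succ) (W k i.succ)) <
      (Ω ^ (-μ - (∑ i, d i) / (p:ℝ))) ^ p *
        ∏ i : Fin p, J (-Ω ^ (M + k + 1)) (W k i.succ) (W k i.succ) := by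
    intro k
    have ht1 := htneg (M + k + 1)
    have hsum := h3 k (fun i j _ _ => horthonorm _ ht1 (W k) (h1 k) (h2 k) i j)
    have hNpos : ∀ i : Fin p, 0 < J (-Ω ^ (M + k + 1)) (W k i.succ) (W k i.succ) :=
      fun i => hdiag _ ht1 (W k) (h1 k) i.succ
    have hgpos : ∀ i : Fin p, 0 < J (-Ω ^ (M + k)) (W k i.succ) (W k i.succ) :=
      fun i => hdiag _ (htneg (M + k)) (W k) (h1 k) i.succ
    have hsum' : ∑ i : Fin p, (J (-Ω ^ (M + k + 1)) (W k i.succ) (W k i.succ))⁻¹ *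
        J (-Ω ^ (M + k)) (W k i.succ) (W k i.succ)
        < (p:ℝ) * Ω ^ (-μ - (∑ i, d i) / (p:ℝ)) := by
      refine lt_of_le_of_lt (le_of_eq (Finset.sum_congr rfl fun i _ => ?_)) hsum
      simp only [map_smul, LinearMap.smul_apply, smul_eq_mul]
      rw [← mul_assoc, ← mul_inv, Real.mul_self_sqrt (hNpos i).le]
    have hprod : (∏ i : Fin p, (J (-Ω ^ (M + k + 1)) (W k i.succ) (W k i.succ))⁻¹ *
        J (-Ω ^ (M + k)) (W k i.succ) (W k i.succ))
        < (Ω ^ (-μ - (∑ i, d i) / (p:ℝ))) ^ p :=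
      amgm_aux hp _ (fun i => mul_nonneg (inv_nonneg.mpr (hNpos i).le) (hgpos i).le) hsum'
    rw [Finset.prod_mul_distrib, Finset.prod_inv_distrib,
      inv_mul_lt_iff₀ (Finset.prod_pos fun i _ => hNpos i)] at hprod
    calc (∏ i : Fin p, J (-Ω ^ (M + k)) (W k i.succ) (W k i.succ))
        < (∏ i : Fin p, J (-Ω ^ (M + k + 1)) (W k i.succ) (W k i.succ)) *
          (Ω ^ (-μ - (∑ i, d i) / (p:ℝ))) ^ p := hprod
      _ = _ := mul_comm _ _
  -- key step 2: comparison between consecutive levels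
  have key2 : ∀ k : ℕ,
      (∏ i : Fin p, J (-Ω ^ (M + k + 1)) (W k i.succ) (W k i.succ)) ≤
      ∏ i : Fin p, J (-Ω ^ (M + (k+1))) (W (k+1) i.succ) (W (k+1) i.succ) := by
    intro k
    have he : M + (k+1) = M + k + 1 := rfl
    rw [he]
    exact Finset.prod_le_prod (fun i _ => (hdiag _ (htneg _) (W k) (h1 k) i.succ).le)
      (fun i _ => hpyth _ (htneg _) (W k) (W (k+1)) (h1 k) (h2 k) (h1 (k+1)) i.succ)
  have chain : ∀ k : ℕ,
      (∏ i : Fin p, J (-Ω ^ (M + k + 1)) (W k i.succ) (W k i.succ)) <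
      (Ω ^ (-μ - (∑ i, d i) / (p:ℝ))) ^ p *
        ∏ i : Fin p, J (-Ω ^ (M + (k+1) + 1)) (W (k+1) i.succ) (W (k+1) i.succ) :=
    fun k => lt_of_le_of_lt (key2 k) (key1 (k+1))
  have hPpos : ∀ k : ℕ, 0 < ∏ i : Fin p, J (-Ω ^ (M + k + 1)) (W k i.succ) (W k i.succ) :=
    fun k => Finset.prod_pos fun i _ => hdiag _ (htneg _) (W k) (h1 k) i.succ
  have hE0 : (0:ℝ) < Ω ^ (-μ - (∑ i, d i) / (p:ℝ)) := Real.rpow_pos_of_pos hΩ0 _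
  -- iterate
  have hiter : ∀ k : ℕ,
      (∏ i : Fin p, J (-Ω ^ (M + 0 + 1)) (W 0 i.succ) (W 0 i.succ)) ≤
      ((Ω ^ (-μ - (∑ i, d i) / (p:ℝ))) ^ p) ^ k *
        ∏ i : Fin p, J (-Ω ^ (M + k + 1)) (W k i.succ) (W k i.succ) := by
    intro k
    induction k with
    | zero => simp
    | succ n ih =>
      calc (∏ i : Fin p, J (-Ω ^ (M + 0 + 1)) (W 0 i.succ) (W 0 i.succ))
          ≤ ((Ω ^ (-μ - (∑ i, d i) / (p:ℝ))) ^ p) ^ n *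
            ∏ i : Fin p, J (-Ω ^ (M + n + 1)) (W n i.succ) (W n i.succ) := ih
        _ ≤ ((Ω ^ (-μ - (∑ i, d i) / (p:ℝ))) ^ p) ^ n *
            ((Ω ^ (-μ - (∑ i, d i) / (p:ℝ))) ^ p *
              ∏ i : Fin p, J (-Ω ^ (M + (n+1) + 1)) (W (n+1) i.succ) (W (n+1) i.succ)) :=
            mul_le_mul_of_nonneg_left (chain n).le (by positivity)
        _ = _ := by ring
  -- positivity of the constants C
  have hB : ∀ i : Fin p, 0 < C i.succ := by
    intro i
    have hJ : 0 < J (-1) (u i.succ) (u i.succ) :=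
      hposdef (-1) (by norm_num) _ (Submodule.subset_span (Set.mem_range_self _)) (hu.ne_zero _)
    have h2' := hCi (-1) (by norm_num) i
    have hx : (0:ℝ) < (1 - (-1:ℝ)) ^ (d i) := Real.rpow_pos_of_pos (by norm_num) _
    nlinarith
  -- upper bound for the Gram product
  have hup : ∀ k : ℕ,
      (∏ i : Fin p, J (-Ω ^ (M + k + 1)) (W k i.succ) (W k i.succ)) ≤
      (∏ i : Fin p, C i.succ) * (1 + Ω ^ (M + k + 1)) ^ (∑ i, d i) := by
    intro k
    have ht1 := htneg (M + k + 1)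
    have hx : (0:ℝ) < 1 + Ω ^ (M + k + 1) := by positivity
    calc (∏ i : Fin p, J (-Ω ^ (M + k + 1)) (W k i.succ) (W k i.succ))
        ≤ ∏ i : Fin p, C i.succ * (1 + Ω ^ (M + k + 1)) ^ (d i) := by
          refine Finset.prod_le_prod (fun i _ => (hdiag _ ht1 (W k) (h1 k) i.succ).le)
            (fun i _ => ?_)
          have hmid := hpyth _ ht1 (W k) u (h1 k) (h2 k) (fun j => by simp) i.succ
          have hci := hCi _ ht1 i
          rw [sub_neg_eq_add] at hci
          exact hmid.trans hci
      _ = (∏ i : Fin p, C i.succ) * (1 + Ω ^ (M + k + 1)) ^ (∑ i, d i) := by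
          rw [Finset.prod_mul_distrib, Real.rpow_sum_of_pos hx d Finset.univ]
  have hDnn : 0 ≤ ∑ i, d i := Finset.sum_nonneg fun i _ => hd i
  have hBpos : 0 < ∏ i : Fin p, C i.succ := Finset.prod_pos fun i _ => hB i
  have hq1 : Ω ^ (-(μ * (p:ℝ))) < 1 :=
    Real.rpow_lt_one_of_one_lt_of_neg hΩ (neg_lt_zero.mpr (by positivity))
  have hA0 : 0 < (∏ i : Fin p, C i.succ) * 2 ^ (∑ i, d i) * Ω ^ (((M:ℝ) + 1) * ∑ i, d i) := by
    have h2' : (0:ℝ) < 2 ^ (∑ i, d i) := Real.rpow_pos_of_pos (by norm_num) _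
    have h3' : (0:ℝ) < Ω ^ (((M:ℝ) + 1) * ∑ i, d i) := Real.rpow_pos_of_pos hΩ0 _
    positivity
  -- main estimate
  have hmain : ∀ k : ℕ,
      (∏ i : Fin p, J (-Ω ^ (M + 0 + 1)) (W 0 i.succ) (W 0 i.succ)) ≤
      ((∏ i : Fin p, C i.succ) * 2 ^ (∑ i, d i) * Ω ^ (((M:ℝ) + 1) * ∑ i, d i)) *
        (Ω ^ (-(μ * (p:ℝ)))) ^ k := by
    intro k
    refine (hiter k).trans ?_
    refine le_trans (mul_le_mul_of_nonneg_left (hup k) (by positivity)) ?_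
    have hyge1 : (1:ℝ) ≤ Ω ^ (M + k + 1) := one_le_pow₀ hΩ.le
    have hstep : (1 + Ω ^ (M + k + 1)) ^ (∑ i, d i) ≤
        ((2:ℝ) * Ω ^ (M + k + 1)) ^ (∑ i, d i) :=
      Real.rpow_le_rpow (by positivity) (by nlinarith) hDnn
    refine le_trans (mul_le_mul_of_nonneg_left
      (mul_le_mul_of_nonneg_left hstep hBpos.le) (by positivity)) (le_of_eq ?_)
    -- now a pure identity of real powers
    have e1 : ((Ω ^ (-μ - (∑ i, d i) / (p:ℝ))) ^ p) ^ k
        = Ω ^ (((-μ - (∑ i, d i) / (p:ℝ)) * p) * k) := by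
      rw [← Real.rpow_natCast (Ω ^ (-μ - (∑ i, d i) / (p:ℝ))) p, ← Real.rpow_mul hΩ0.le,
        ← Real.rpow_natCast (Ω ^ ((-μ - (∑ i, d i) / (p:ℝ)) * (p:ℕ))) k,
        ← Real.rpow_mul hΩ0.le]
    have e2 : ((2:ℝ) * Ω ^ (M + k + 1)) ^ (∑ i, d i)
        = 2 ^ (∑ i, d i) * Ω ^ (((M:ℝ) + k + 1) * ∑ i, d i) := by
      rw [Real.mul_rpow (by norm_num) (by positivity), ← Real.rpow_natCast Ω (M + k + 1),
        ← Real.rpow_mul hΩ0.le]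
      congr 2
      push_cast
      ring
    have e3 : (Ω ^ (-(μ * (p:ℝ)))) ^ k = Ω ^ ((-(μ * (p:ℝ))) * k) := by
      rw [← Real.rpow_natCast (Ω ^ (-(μ * (p:ℝ)))) k, ← Real.rpow_mul hΩ0.le]
    calc ((Ω ^ (-μ - (∑ i, d i) / (p:ℝ))) ^ p) ^ k *
          ((∏ i : Fin p, C i.succ) * ((2:ℝ) * Ω ^ (M + k + 1)) ^ (∑ i, d i))
        = (∏ i : Fin p, C i.succ) * 2 ^ (∑ i, d i) *
          (Ω ^ (((-μ - (∑ i, d i) / (p:ℝ)) * p) * k) *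
            Ω ^ (((M:ℝ) + k + 1) * ∑ i, d i)) := by rw [e1, e2]; ring
      _ = (∏ i : Fin p, C i.succ) * 2 ^ (∑ i, d i) *
          Ω ^ ((((-μ - (∑ i, d i) / (p:ℝ)) * p) * k) + ((M:ℝ) + k + 1) * ∑ i, d i) := by
            rw [← Real.rpow_add hΩ0]
      _ = (∏ i : Fin p, C i.succ) * 2 ^ (∑ i, d i) *
          Ω ^ ((((M:ℝ) + 1) * ∑ i, d i) + (-(μ * (p:ℝ))) * k) := by
            congr 1
            field_simp
            ring
      _ = (∏ i : Fin p, C i.succ) * 2 ^ (∑ i, d i) *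
          (Ω ^ (((M:ℝ) + 1) * ∑ i, d i) * Ω ^ ((-(μ * (p:ℝ))) * k)) := by
            rw [Real.rpow_add hΩ0]
      _ = ((∏ i : Fin p, C i.succ) * 2 ^ (∑ i, d i) * Ω ^ (((M:ℝ) + 1) * ∑ i, d i)) *
          (Ω ^ (-(μ * (p:ℝ)))) ^ k := by rw [e3]; ring
  -- contradiction
  obtain ⟨k, hk⟩ := exists_pow_lt_of_lt_one (div_pos (hPpos 0) hA0) hq1
  have h5 := hmain k
  have h6 : ((∏ i : Fin p, C i.succ) * 2 ^ (∑ i, d i) * Ω ^ (((M:ℝ) + 1) * ∑ i, d i)) *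
      (Ω ^ (-(μ * (p:ℝ)))) ^ k <
      (∏ i : Fin p, J (-Ω ^ (M + 0 + 1)) (W 0 i.succ) (W 0 i.succ)) := by
    calc ((∏ i : Fin p, C i.succ) * 2 ^ (∑ i, d i) * Ω ^ (((M:ℝ) + 1) * ∑ i, d i)) *
        (Ω ^ (-(μ * (p:ℝ)))) ^ k
        < ((∏ i : Fin p, C i.succ) * 2 ^ (∑ i, d i) * Ω ^ (((M:ℝ) + 1) * ∑ i, d i)) *
          ((∏ i : Fin p, J (-Ω ^ (M + 0 + 1)) (W 0 i.succ) (W 0 i.succ)) /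
            ((∏ i : Fin p, C i.succ) * 2 ^ (∑ i, d i) * Ω ^ (((M:ℝ) + 1) * ∑ i, d i))) :=
          mul_lt_mul_of_pos_left hk hA0
      _ = _ := by field_simp
  linarith
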